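/- Let 0 < α < 1, let f be a continuous 2π-periodic real-valued function with f ∈ Lip(α), let β ≥ 0, and let {p_k} be a sequence of nonnegative numbers with P_n := Σ_{k=0}^{n} p_k ≠ 0. Define R_n(f;x) = (1/P_n) Σ_{k=0}^{n} p_k S_k(f;x) and suppose the matrix a_{n,k} = p_k/P_n (0 ≤ k ≤ n, zero otherwise) satisfies: there is a constant C, independent of n and m, with Σ_{k=0}^{m-1} (k+1)^β |a_{n,k}/(k+1)^β − a_{n,k+1}/(k+2)^β| ≤ C·a_{n,m} for all 0 ≤ m ≤ n. Then ‖R_n(f) − f‖_∞ = O( (p_n/P_n)^α ), with the implied constant independent of n. -/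

import Mathlib

open Real MeasureTheory Finset

/-- The `k`-th partial sum of the (trigonometric) Fourier series of `f` at `x`. -/
noncomputable def fourierPartialSum (f : ℝ → ℝ) (k : ℕ) (x : ℝ) : ℝ :=
  (1 / (2 * Real.pi)) * (∫ t in (-Real.pi)..Real.pi, f t) +
    ∑ j ∈ Finset.Icc 1 k,
      ((1 / Real.pi) * (∫ t in (-Real.pi)..Real.pi, f t * Real.cos (j * t)) * Real.cos (j * x) +
        (1 / Real.pi) * (∫ t in (-Real.pi)..Real.pi, f t * Real.sin (j * t)) * Real.sin (j * x))

/-- The `A`-transform `T_{n,A}(f;x) = ∑_{k=0}^n a_{n,k} S_k(f;x)`. -/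
noncomputable def matrixTransform (a : ℕ → ℕ → ℝ) (f : ℝ → ℝ) (n : ℕ) (x : ℝ) : ℝ :=
  ∑ k ∈ Finset.range (n + 1), a n k * fourierPartialSum f k x

/-- The modulus of continuity `ω(δ,f)`. -/
noncomputable def modulusOfContinuity (f : ℝ → ℝ) (δ : ℝ) : ℝ :=
  sSup {y : ℝ | ∃ x t : ℝ, |t| ≤ δ ∧ y = |f (x + t) - f x|}

noncomputable def Dk (k : ℕ) (t : ℝ) : ℝ := 1/2 + ∑ j ∈ Finset.Icc 1 k, Real.cos (j * t)

lemma cos_diff (a b : ℝ) : Real.cos (a-b) - Real.cos (a+b) = 2 * Real.sin a * Real.sin b := by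
  rw [Real.cos_sub, Real.cos_add]; ring

lemma sin_diff (a b : ℝ) : Real.sin (a+b) - Real.sin (a-b) = 2 * Real.cos a * Real.sin b := by
  rw [Real.sin_add, Real.sin_sub]; ring

@[fun_prop]
lemma dk_continuous (k : ℕ) : Continuous (Dk k) := by
  unfold Dk
  exact continuous_const.add (continuous_finset_sum _ (fun j _ => (Real.continuous_cos.comp (continuous_const.mul continuous_id))))

lemma dk_sin (k : ℕ) (t : ℝ) : 2 * Real.sin (t/2) * Dk k t = Real.sin (((k:ℝ) + 1/2) * t) := by
  induction k with
  | zero => simp [Dk]; ring_nf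
  | succ k ih =>
    rw [Dk, Finset.sum_Icc_succ_top (by omega : 1 ≤ k + 1)]
    have h := sin_diff (((k:ℝ)+1) * t) (t/2)
    have e1 : ((k:ℝ)+1) * t + t/2 = (((k+1:ℕ):ℝ) + 1/2) * t := by push_cast; ring
    have e2 : ((k:ℝ)+1) * t - t/2 = ((k:ℝ) + 1/2) * t := by ring
    rw [e1, e2] at h
    have : (((k+1:ℕ)):ℝ) * t = ((k:ℝ)+1) * t := by push_cast; ring
    rw [Dk] at ih
    rw [this]
    nlinarith [ih, h]

lemma dk_bound (k : ℕ) (t : ℝ) : |Dk k t| ≤ (k:ℝ) + 1 := by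
  unfold Dk
  calc |1/2 + ∑ j ∈ Finset.Icc 1 k, Real.cos (j * t)|
      ≤ |(1:ℝ)/2| + |∑ j ∈ Finset.Icc 1 k, Real.cos (j * t)| := abs_add_le _ _
    _ ≤ 1/2 + ∑ j ∈ Finset.Icc 1 k, |Real.cos (j * t)| := by
        rw [abs_of_nonneg (by norm_num : (0:ℝ) ≤ 1/2)]
        exact add_le_add le_rfl (Finset.abs_sum_le_sum_abs _ _)
    _ ≤ 1/2 + ∑ j ∈ Finset.Icc 1 k, 1 := by
        exact add_le_add le_rfl (Finset.sum_le_sum (fun j _ => Real.abs_cos_le_one _))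
    _ ≤ (k:ℝ) + 1 := by
        rw [Finset.sum_const, Nat.card_Icc, nsmul_eq_mul]
        push_cast
        simp
        linarith

lemma dk_even (k : ℕ) (t : ℝ) : Dk k (-t) = Dk k t := by
  unfold Dk
  congr 1
  exact Finset.sum_congr rfl (fun j _ => by rw [mul_neg, Real.cos_neg])

lemma dk_periodic (k : ℕ) : Function.Periodic (Dk k) (2*Real.pi) := by
  intro t
  unfold Dk
  congr 1
  refine Finset.sum_congr rfl (fun j _ => ?_)
  have : (j:ℝ) * (t + 2*Real.pi) = j*t + (j:ℕ) * (2*Real.pi) := by push_cast; ring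
  rw [this, Real.cos_add_nat_mul_two_pi]

lemma sinsum (j : ℕ) (t : ℝ) :
    2 * Real.sin (t/2) * (∑ k ∈ Finset.range (j+1), Real.sin (((k:ℝ) + 1/2) * t))
      = 1 - Real.cos (((j:ℝ)+1) * t) := by
  induction j with
  | zero =>
    norm_num [Finset.sum_range_one]
    have h := cos_diff (t/2) (t/2)
    simp only [sub_self, Real.cos_zero] at h
    rw [show t/2 + t/2 = t by ring] at h
    rw [show (1:ℝ)/2 * t = t/2 by ring]
    linarith
  | succ j ih =>
    rw [Finset.sum_range_succ]
    have h := cos_diff (((j:ℝ)+1+1/2) * t) (t/2)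
    have e1 : ((j:ℝ)+1+1/2) * t - t/2 = ((j:ℝ)+1) * t := by ring
    have e2 : ((j:ℝ)+1+1/2) * t + t/2 = (((j+1:ℕ):ℝ)+1) * t := by push_cast; ring
    rw [e1, e2] at h
    have e3 : (((j+1:ℕ)):ℝ) + 1/2 = (j:ℝ)+1+1/2 := by push_cast; ring
    rw [e3]
    nlinarith [ih, h]

lemma abel_bound (w g M : ℕ → ℝ) (n : ℕ)
    (hM : ∀ j, j ≤ n → |∑ k ∈ Finset.range (j+1), g k| ≤ M j) :
    |∑ k ∈ Finset.range (n+1), w k * g k|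
      ≤ ∑ k ∈ Finset.range n, |w k - w (k+1)| * M k + |w n| * M n := by
  have hbp := Finset.sum_range_by_parts w g (n+1)
  simp only [smul_eq_mul, Nat.add_sub_cancel] at hbp
  rw [hbp]
  calc |w n * ∑ i ∈ Finset.range (n+1), g i -
        ∑ i ∈ Finset.range n, (w (i+1) - w i) * ∑ j ∈ Finset.range (i+1), g j|
      ≤ |w n * ∑ i ∈ Finset.range (n+1), g i| +
        |∑ i ∈ Finset.range n, (w (i+1) - w i) * ∑ j ∈ Finset.range (i+1), g j| :=
        abs_sub _ _
    _ ≤ |w n| * M n + ∑ i ∈ Finset.range n, |w i - w (i+1)| * M i := by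
        gcongr ?_ + ?_
        · rw [abs_mul]
          exact mul_le_mul_of_nonneg_left (hM n le_rfl) (abs_nonneg _)
        · refine (Finset.abs_sum_le_sum_abs _ _).trans (Finset.sum_le_sum fun i hi => ?_)
          rw [abs_mul, abs_sub_comm (w (i+1))]
          exact mul_le_mul_of_nonneg_left (hM i (le_of_lt (Finset.mem_range.mp hi))) (abs_nonneg _)
    _ = _ := by ring

lemma G_bound (j : ℕ) {t : ℝ} (ht : 0 < Real.sin (t/2)) :
    |∑ k ∈ Finset.range (j+1), Real.sin (((k:ℝ) + 1/2) * t)| ≤ 1 / Real.sin (t/2) := by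
  have h := sinsum j t
  have hs : ∑ k ∈ Finset.range (j+1), Real.sin (((k:ℝ) + 1/2) * t)
      = (1 - Real.cos (((j:ℝ)+1) * t)) / (2 * Real.sin (t/2)) := by
    field_simp at h ⊢; linarith
  rw [hs, abs_div, abs_of_pos (by linarith : (0:ℝ) < 2 * Real.sin (t/2))]
  rw [div_le_div_iff₀ (by linarith) ht]
  have h1 : |1 - Real.cos (((j:ℝ)+1) * t)| ≤ 2 := by
    have := Real.neg_one_le_cos (((j:ℝ)+1) * t)
    have := Real.cos_le_one (((j:ℝ)+1) * t)
    rw [abs_le]; constructor <;> linarith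
  nlinarith

lemma weighted_G_bound {β : ℝ} (hβ : 0 ≤ β) (j : ℕ) {t : ℝ} (ht : 0 < Real.sin (t/2)) :
    |∑ k ∈ Finset.range (j+1), ((k:ℝ)+1) ^ β * Real.sin (((k:ℝ) + 1/2) * t)|
      ≤ 2 * ((j:ℝ)+1) ^ β / Real.sin (t/2) := by
  have h := abel_bound (fun k => ((k:ℝ)+1) ^ β) (fun k => Real.sin (((k:ℝ) + 1/2) * t))
      (fun _ => 1 / Real.sin (t/2)) j (fun i _ => G_bound i ht)
  refine h.trans ?_
  beta_reduce
  have hmono : ∀ k : ℕ, ((k:ℝ)+1) ^ β ≤ (((k+1:ℕ):ℝ)+1) ^ β := by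
    intro k
    apply Real.rpow_le_rpow (by positivity) _ hβ
    push_cast; linarith
  have habs : ∀ k : ℕ, |((k:ℝ)+1) ^ β - (((k+1:ℕ):ℝ)+1) ^ β|
      = (((k+1:ℕ):ℝ)+1) ^ β - ((k:ℝ)+1) ^ β := by
    intro k; rw [abs_sub_comm, abs_of_nonneg (by linarith [hmono k])]
  have htel : ∑ k ∈ Finset.range j, |((k:ℝ)+1) ^ β - (((k+1:ℕ):ℝ)+1) ^ β|
      = ((j:ℝ)+1) ^ β - ((0:ℝ)+1) ^ β := by
    rw [Finset.sum_congr rfl (fun k _ => habs k)]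
    have := Finset.sum_range_sub (fun k => ((k:ℝ)+1) ^ β) j
    push_cast at this ⊢
    linarith [this]
  rw [← Finset.sum_mul]
  rw [htel]
  have h1 : ((0:ℝ)+1) ^ β = 1 := by norm_num [Real.one_rpow]
  have hjpos : (0:ℝ) < ((j:ℝ)+1) ^ β := by positivity
  have habsj : |((j:ℝ)+1) ^ β| = ((j:ℝ)+1) ^ β := abs_of_pos hjpos
  rw [h1, habsj]
  have h2 : (0:ℝ) ≤ 1 / Real.sin (t/2) := by positivity
  have h3 : 2 * ((j:ℝ)+1) ^ β / Real.sin (t/2) = 2 * ((j:ℝ)+1) ^ β * (1 / Real.sin (t/2)) := by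
    ring
  rw [h3]
  nlinarith [h2, hjpos]

lemma tele_abs (b : ℕ → ℝ) (m n : ℕ) (h : m ≤ n) :
    |b m - b n| ≤ ∑ k ∈ Finset.Ico m n, |b k - b (k+1)| := by
  have hsum : ∑ k ∈ Finset.Ico m n, (b k - b (k+1)) = b m - b n := by
    have h1 := Finset.sum_range_sub (fun k => b k) n
    have h2 := Finset.sum_range_sub (fun k => b k) m
    have h4 : ∀ j : ℕ, ∑ k ∈ Finset.range j, (b k - b (k+1))
        = - ∑ k ∈ Finset.range j, (b (k+1) - b k) := by
      intro j; rw [← Finset.sum_neg_distrib]; exact Finset.sum_congr rfl (fun k _ => by ring)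
    rw [Finset.sum_Ico_eq_sub _ h, h4 n, h4 m, h1, h2]
    ring
  calc |b m - b n| = |∑ k ∈ Finset.Ico m n, (b k - b (k+1))| := by rw [hsum]
    _ ≤ ∑ k ∈ Finset.Ico m n, |b k - b (k+1)| := Finset.abs_sum_le_sum_abs _ _

section coeffs

variable {β : ℝ} (hβ : 0 ≤ β)
variable {p : ℕ → ℝ} (hp : ∀ k : ℕ, 0 ≤ p k)
variable (hP : ∀ n : ℕ, (∑ k ∈ Finset.range (n + 1), p k) ≠ 0)
variable {a : ℕ → ℕ → ℝ}
variable (ha : ∀ n k : ℕ, k ≤ n → a n k = p k / ∑ i ∈ Finset.range (n + 1), p i)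
variable {C : ℝ} (hC : 0 < C)
variable (hA : ∀ n m : ℕ, m ≤ n →
      ∑ k ∈ Finset.range m,
        ((k : ℝ) + 1) ^ β * |a n k / ((k : ℝ) + 1) ^ β - a n (k + 1) / ((k : ℝ) + 2) ^ β|
        ≤ C * a n m)

include hp hP in
lemma Ppos (n : ℕ) : 0 < ∑ k ∈ Finset.range (n + 1), p k :=
  lt_of_le_of_ne (Finset.sum_nonneg fun k _ => hp k) (Ne.symm (hP n))

include hp hP ha in
lemma ank_nonneg {n k : ℕ} (h : k ≤ n) : 0 ≤ a n k := by
  rw [ha n k h]; exact div_nonneg (hp k) (le_of_lt (Ppos hp hP n))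

include hp hP ha in
lemma asum (n : ℕ) : ∑ k ∈ Finset.range (n+1), a n k = 1 := by
  rw [Finset.sum_congr rfl (fun k hk => ha n k (Nat.lt_succ_iff.mp (Finset.mem_range.mp hk)))]
  rw [← Finset.sum_div, div_self (hP n)]

include hβ hp hP ha hC hA in
lemma a_le {n m : ℕ} (h : m ≤ n) : a n m ≤ (C + 1) * a n n := by
  set b : ℕ → ℝ := fun k => a n k / ((k:ℝ)+1) ^ β with hb
  have hpow : ∀ k : ℕ, (0:ℝ) < ((k:ℝ)+1) ^ β := fun k => by positivity
  have hank : a n m = ((m:ℝ)+1) ^ β * b m := by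
    rw [hb]; field_simp
  have h1 : b m ≤ b n + ∑ k ∈ Finset.Ico m n, |b k - b (k+1)| := by
    have := tele_abs b m n h
    have h2 : b m - b n ≤ |b m - b n| := le_abs_self _
    linarith
  have hkey : ((m:ℝ)+1) ^ β * ∑ k ∈ Finset.Ico m n, |b k - b (k+1)|
      ≤ ∑ k ∈ Finset.Ico m n, ((k:ℝ)+1) ^ β * |b k - b (k+1)| := by
    rw [Finset.mul_sum]
    refine Finset.sum_le_sum fun k hk => ?_
    have hk' : m ≤ k := (Finset.mem_Ico.mp hk).1
    refine mul_le_mul_of_nonneg_right ?_ (abs_nonneg _)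
    have hc : (m:ℝ) ≤ (k:ℝ) := Nat.cast_le.mpr hk'
    exact Real.rpow_le_rpow (by positivity) (by linarith) hβ
  have hsub : ∑ k ∈ Finset.Ico m n, ((k:ℝ)+1) ^ β * |b k - b (k+1)|
      ≤ ∑ k ∈ Finset.range n, ((k:ℝ)+1) ^ β * |b k - b (k+1)| := by
    apply Finset.sum_le_sum_of_subset_of_nonneg
    · intro k hk; simp only [Finset.mem_range, Finset.mem_Ico] at *; omega
    · intro k _ _; positivity
  have hAn : ∑ k ∈ Finset.range n, ((k:ℝ)+1) ^ β * |b k - b (k+1)| ≤ C * a n n := by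
    have := hA n n le_rfl
    refine le_trans (le_of_eq (Finset.sum_congr rfl fun k _ => ?_)) this
    rw [hb]
    push_cast
    ring_nf
  have hbn : ((m:ℝ)+1) ^ β * b n ≤ a n n := by
    have hbnn : 0 ≤ b n := div_nonneg (ank_nonneg hp hP ha le_rfl) (le_of_lt (hpow n))
    have hc : (m:ℝ) ≤ (n:ℝ) := Nat.cast_le.mpr h
    have : ((m:ℝ)+1) ^ β ≤ ((n:ℝ)+1) ^ β :=
      Real.rpow_le_rpow (by positivity) (by linarith) hβ
    calc ((m:ℝ)+1) ^ β * b n ≤ ((n:ℝ)+1) ^ β * b n := mul_le_mul_of_nonneg_right this hbnn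
      _ = a n n := by rw [hb]; field_simp
  calc a n m = ((m:ℝ)+1) ^ β * b m := hank
    _ ≤ ((m:ℝ)+1) ^ β * b n + ((m:ℝ)+1) ^ β * ∑ k ∈ Finset.Ico m n, |b k - b (k+1)| := by
        have := mul_le_mul_of_nonneg_left h1 (le_of_lt (hpow m)); linarith [this]
    _ ≤ a n n + C * a n n := by
        have := hkey.trans (hsub.trans hAn); linarith [hbn]
    _ = (C + 1) * a n n := by ring

include hβ hp hP ha hC hA in
lemma delta_pos (n : ℕ) : 0 < a n n := by
  rcases lt_or_eq_of_le (ank_nonneg hp hP ha (le_refl n)) with h | h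
  · exact h
  · exfalso
    have hzero : ∀ k ∈ Finset.range (n+1), a n k = 0 := by
      intro k hk
      have hk' : k ≤ n := Nat.lt_succ_iff.mp (Finset.mem_range.mp hk)
      have h1 := a_le hβ hp hP ha hC hA hk'
      have h2 := ank_nonneg hp hP ha hk'
      rw [← h] at h1
      simp at h1
      linarith
    have := asum hp hP ha n
    rw [Finset.sum_congr rfl hzero, Finset.sum_const, smul_zero] at this
    norm_num at this

include hβ hp hP ha hC hA in
lemma kernel_sum_bound (n : ℕ) {t : ℝ} (ht : 0 < Real.sin (t/2)) :
    |∑ k ∈ Finset.range (n+1), a n k * Real.sin (((k:ℝ) + 1/2) * t)|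
      ≤ 2 * (C + 1) * a n n / Real.sin (t/2) := by
  set b : ℕ → ℝ := fun k => a n k / ((k:ℝ)+1) ^ β with hb
  have hpow : ∀ k : ℕ, (0:ℝ) < ((k:ℝ)+1) ^ β := fun k => by positivity
  have hrw : ∀ k : ℕ, a n k * Real.sin (((k:ℝ) + 1/2) * t)
      = b k * (((k:ℝ)+1) ^ β * Real.sin (((k:ℝ) + 1/2) * t)) := by
    intro k; rw [hb]; field_simp
  rw [Finset.sum_congr rfl (fun k _ => hrw k)]
  have habel := abel_bound b (fun k => ((k:ℝ)+1) ^ β * Real.sin (((k:ℝ) + 1/2) * t))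
      (fun j => 2 * ((j:ℝ)+1) ^ β / Real.sin (t/2)) n
      (fun j _ => weighted_G_bound hβ j ht)
  refine habel.trans ?_
  beta_reduce
  have hsum1 : ∑ k ∈ Finset.range n, |b k - b (k+1)| * (2 * ((k:ℝ)+1) ^ β / Real.sin (t/2))
      = (2 / Real.sin (t/2)) * ∑ k ∈ Finset.range n, ((k:ℝ)+1) ^ β * |b k - b (k+1)| := by
    rw [Finset.mul_sum]
    exact Finset.sum_congr rfl (fun k _ => by ring)
  have hAn : ∑ k ∈ Finset.range n, ((k:ℝ)+1) ^ β * |b k - b (k+1)| ≤ C * a n n := by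
    have hAnn := hA n n le_rfl
    refine le_trans (le_of_eq (Finset.sum_congr rfl fun k _ => ?_)) hAnn
    rw [hb]
    push_cast
    ring_nf
  have hbn : |b n| * (2 * ((n:ℝ)+1) ^ β / Real.sin (t/2)) = (2 / Real.sin (t/2)) * a n n := by
    rw [hb, abs_of_nonneg (div_nonneg (ank_nonneg hp hP ha le_rfl) (le_of_lt (hpow n)))]
    field_simp
  rw [hsum1, hbn]
  have h2s : (0:ℝ) < 2 / Real.sin (t/2) := by positivity
  have := mul_le_mul_of_nonneg_left hAn (le_of_lt h2s)
  have heq : 2 * (C + 1) * a n n / Real.sin (t/2)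
      = (2 / Real.sin (t/2)) * (C * a n n) + (2 / Real.sin (t/2)) * a n n := by
    field_simp
  linarith

include hp hP ha in
lemma kernel_sum_bound' (n : ℕ) (t : ℝ) :
    |∑ k ∈ Finset.range (n+1), a n k * Real.sin (((k:ℝ) + 1/2) * t)| ≤ 1 := by
  calc |∑ k ∈ Finset.range (n+1), a n k * Real.sin (((k:ℝ) + 1/2) * t)|
      ≤ ∑ k ∈ Finset.range (n+1), |a n k * Real.sin (((k:ℝ) + 1/2) * t)| :=
        Finset.abs_sum_le_sum_abs _ _
    _ ≤ ∑ k ∈ Finset.range (n+1), a n k := by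
        refine Finset.sum_le_sum fun k hk => ?_
        have hk' : k ≤ n := Nat.lt_succ_iff.mp (Finset.mem_range.mp hk)
        have h1 := ank_nonneg hp hP ha hk'
        rw [abs_mul, abs_of_nonneg h1]
        calc a n k * |Real.sin (((k:ℝ) + 1/2) * t)| ≤ a n k * 1 :=
              mul_le_mul_of_nonneg_left (Real.abs_sin_le_one _) h1
          _ = a n k := mul_one _
    _ = 1 := asum hp hP ha n

end coeffs

section fourier

variable {f : ℝ → ℝ} (hf : Continuous f) (hper : Function.Periodic f (2 * Real.pi))

include hf in
lemma fps_rep (k : ℕ) (x : ℝ) :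
    fourierPartialSum f k x = (1/Real.pi) * ∫ t in (-Real.pi)..Real.pi, f t * Dk k (t - x) := by
  have h1 : ∀ t : ℝ, f t * Dk k (t - x)
      = f t * (1/2) + ∑ j ∈ Finset.Icc 1 k,
          (f t * Real.cos (j*t) * Real.cos (j*x) + f t * Real.sin (j*t) * Real.sin (j*x)) := by
    intro t
    unfold Dk
    rw [mul_add, Finset.mul_sum]
    congr 1
    refine Finset.sum_congr rfl fun j _ => ?_
    rw [mul_sub, Real.cos_sub]
    ring
  rw [intervalIntegral.integral_congr (g := fun t => f t * (1/2) + ∑ j ∈ Finset.Icc 1 k,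
          (f t * Real.cos (j*t) * Real.cos (j*x) + f t * Real.sin (j*t) * Real.sin (j*x)))
      (fun t _ => h1 t)]
  rw [intervalIntegral.integral_add (by apply Continuous.intervalIntegrable; fun_prop)
      (by apply Continuous.intervalIntegrable; fun_prop)]
  rw [intervalIntegral.integral_finset_sum
      (fun j _ => by apply Continuous.intervalIntegrable (μ := volume); fun_prop)]
  have h2 : ∀ j ∈ Finset.Icc 1 k,
      (∫ t in (-Real.pi)..Real.pi,
        (f t * Real.cos (j*t) * Real.cos (j*x) + f t * Real.sin (j*t) * Real.sin (j*x)))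
      = (∫ t in (-Real.pi)..Real.pi, f t * Real.cos (j*t)) * Real.cos (j*x)
        + (∫ t in (-Real.pi)..Real.pi, f t * Real.sin (j*t)) * Real.sin (j*x) := by
    intro j _
    rw [intervalIntegral.integral_add (by apply Continuous.intervalIntegrable; fun_prop)
        (by apply Continuous.intervalIntegrable; fun_prop),
      intervalIntegral.integral_mul_const, intervalIntegral.integral_mul_const]
  rw [Finset.sum_congr rfl h2]
  unfold fourierPartialSum
  rw [intervalIntegral.integral_mul_const, mul_add, Finset.mul_sum]
  have hpi := Real.pi_ne_zero
  congr 1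
  · ring
  · refine Finset.sum_congr rfl fun j _ => ?_
    ring

include hf hper in
lemma fps_shift (k : ℕ) (x : ℝ) :
    fourierPartialSum f k x = (1/Real.pi) * ∫ u in (-Real.pi)..Real.pi, f (x + u) * Dk k u := by
  rw [fps_rep hf k x]
  set g : ℝ → ℝ := fun u => f (x + u) * Dk k u with hg
  have hgc : Continuous g := by
    rw [hg]; exact (hf.comp (continuous_const.add continuous_id)).mul (dk_continuous k)
  have h1 : (∫ t in (-Real.pi)..Real.pi, f t * Dk k (t - x))
      = ∫ t in (-Real.pi)..Real.pi, g (t - x) := by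
    refine intervalIntegral.integral_congr fun t _ => ?_
    rw [hg]
    simp only [add_sub_cancel]
  rw [h1, intervalIntegral.integral_comp_sub_right g x]
  have hgper : Function.Periodic g (2 * Real.pi) := by
    intro u
    rw [hg]
    simp only
    rw [show x + (u + 2*Real.pi) = (x + u) + 2*Real.pi by ring, hper (x+u), dk_periodic k u]
  have h2 := hgper.intervalIntegral_add_eq (-Real.pi - x) (-Real.pi)
  have e1 : -Real.pi - x + 2*Real.pi = Real.pi - x := by ring
  have e2 : -Real.pi + 2*Real.pi = Real.pi := by ring
  rw [e1, e2] at h2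
  rw [h2]

include hf hper in
lemma fps_sub (k : ℕ) (x : ℝ) :
    fourierPartialSum f k x - f x
      = (1/Real.pi) * ∫ t in (0:ℝ)..Real.pi,
          (f (x + t) + f (x - t) - 2 * f x) * Dk k t := by
  have hpi := Real.pi_pos
  have hgc : Continuous (fun u => f (x + u) * Dk k u) :=
    (hf.comp (continuous_const.add continuous_id)).mul (dk_continuous k)
  have hsplit : (∫ u in (-Real.pi)..Real.pi, f (x + u) * Dk k u)
      = (∫ u in (-Real.pi)..(0:ℝ), f (x + u) * Dk k u)
        + ∫ u in (0:ℝ)..Real.pi, f (x + u) * Dk k u :=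
    (intervalIntegral.integral_add_adjacent_intervals
      (hgc.intervalIntegrable _ _) (hgc.intervalIntegrable _ _)).symm
  have hneg : (∫ u in (-Real.pi)..(0:ℝ), f (x + u) * Dk k u)
      = ∫ t in (0:ℝ)..Real.pi, f (x - t) * Dk k t := by
    have h3 : (∫ t in (0:ℝ)..Real.pi, f (x + (-t)) * Dk k (-t))
        = ∫ u in (-Real.pi)..(0:ℝ), f (x + u) * Dk k u := by
      have := intervalIntegral.integral_comp_neg (f := fun u => f (x + u) * Dk k u)
        (a := (0:ℝ)) (b := Real.pi)
      simpa using this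
    rw [← h3]
    refine intervalIntegral.integral_congr fun t _ => ?_
    rw [dk_even, show x + -t = x - t by ring]
  have hDkint : (∫ t in (0:ℝ)..Real.pi, Dk k t) = Real.pi / 2 := by
    unfold Dk
    rw [intervalIntegral.integral_add (by apply Continuous.intervalIntegrable; fun_prop)
        (by apply Continuous.intervalIntegrable; fun_prop)]
    rw [intervalIntegral.integral_finset_sum
        (fun j _ => by apply Continuous.intervalIntegrable (μ := volume); fun_prop)]
    have hzero : ∀ j ∈ Finset.Icc 1 k, (∫ t in (0:ℝ)..Real.pi, Real.cos (j*t)) = 0 := by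
      intro j hj
      have hj1 : 1 ≤ j := (Finset.mem_Icc.mp hj).1
      have hjne : (j:ℝ) ≠ 0 := by positivity
      rw [intervalIntegral.integral_comp_mul_left (fun t => Real.cos t) hjne]
      simp [Real.sin_nat_mul_pi]
    rw [Finset.sum_congr rfl hzero]
    simp
    ring
  have hrep := fps_shift hf hper k x
  rw [hrep]
  have hsub : (∫ t in (0:ℝ)..Real.pi, (f (x + t) + f (x - t) - 2 * f x) * Dk k t)
      = (∫ t in (0:ℝ)..Real.pi, f (x+t) * Dk k t) + (∫ t in (0:ℝ)..Real.pi, f (x-t) * Dk k t)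
        - (2 * f x) * (Real.pi / 2) := by
    rw [← hDkint, ← intervalIntegral.integral_const_mul]
    rw [← intervalIntegral.integral_add (by apply Continuous.intervalIntegrable; fun_prop)
        (by apply Continuous.intervalIntegrable; fun_prop)]
    rw [← intervalIntegral.integral_sub (by apply Continuous.intervalIntegrable; fun_prop)
        (by apply Continuous.intervalIntegrable; fun_prop)]
    refine intervalIntegral.integral_congr fun t _ => ?_
    ring
  rw [hsub, hsplit, hneg]
  field_simp
  ring

end fourier

set_option maxHeartbeats 2000000 in
theorem riesz_mean_approx_lipschitz
    (α : ℝ) (hα0 : 0 < α) (hα1 : α < 1)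
    (f : ℝ → ℝ) (hf : Continuous f) (hper : Function.Periodic f (2 * Real.pi))
    (hLip : ∃ L : ℝ, ∀ x y : ℝ, |f x - f y| ≤ L * |x - y| ^ α)
    (β : ℝ) (hβ : 0 ≤ β)
    (p : ℕ → ℝ) (hp : ∀ k : ℕ, 0 ≤ p k)
    (hP : ∀ n : ℕ, (∑ k ∈ Finset.range (n + 1), p k) ≠ 0)
    (a : ℕ → ℕ → ℝ)
    (ha : ∀ n k : ℕ, k ≤ n → a n k = p k / ∑ i ∈ Finset.range (n + 1), p i)
    (htri : ∀ n k : ℕ, n < k → a n k = 0)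
    (C : ℝ) (hC : 0 < C)
    (hA : ∀ n m : ℕ, m ≤ n →
      ∑ k ∈ Finset.range m,
        ((k : ℝ) + 1) ^ β * |a n k / ((k : ℝ) + 1) ^ β - a n (k + 1) / ((k : ℝ) + 2) ^ β|
        ≤ C * a n m)
    :
    ∃ C' : ℝ, 0 < C' ∧ ∀ (n : ℕ) (x : ℝ),
      |(∑ k ∈ Finset.range (n + 1), p k * fourierPartialSum f k x) /
          (∑ k ∈ Finset.range (n + 1), p k) - f x|
        ≤ C' * (p n / ∑ k ∈ Finset.range (n + 1), p k) ^ α := by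
  obtain ⟨L, hL⟩ := hLip
  have hpi := Real.pi_pos
  have hpi1 : (1:ℝ) ≤ Real.pi := by linarith [Real.pi_gt_three]
  have hL0 : 0 ≤ L := by
    have h := hL 0 1
    have : |(0:ℝ) - 1| = 1 := by norm_num
    rw [this, Real.one_rpow, mul_one] at h
    exact le_trans (abs_nonneg _) h
  have h1α : 0 < 1 - α := by linarith
  refine ⟨2*L + L*Real.pi/α + 2*L*Real.pi^2*(C+1)/(1-α) + 1, by positivity, ?_⟩
  intro n x
  -- notation
  set P : ℝ := ∑ k ∈ Finset.range (n+1), p k with hPdef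
  have hPn : 0 < P := Ppos hp hP n
  set δ : ℝ := a n n with hδdef
  have hδval : δ = p n / P := ha n n le_rfl
  have hδpos : 0 < δ := delta_pos hβ hp hP ha hC hA n
  have hδle1 : δ ≤ 1 := by
    rw [hδval, div_le_one hPn]
    exact Finset.single_le_sum (fun k _ => hp k) (Finset.self_mem_range_succ n)
  -- the kernel
  set Kn : ℝ → ℝ := fun t => ∑ k ∈ Finset.range (n+1), a n k * Dk k t with hKn
  have hKnc : Continuous Kn := by
    rw [hKn]
    exact continuous_finset_sum _ fun k _ => continuous_const.mul (dk_continuous k)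
  set ψ : ℝ → ℝ := fun t => f (x + t) + f (x - t) - 2 * f x with hψdef
  have hψc : Continuous ψ := by
    rw [hψdef]; fun_prop
  -- rewrite LHS as integral
  have hLHS : (∑ k ∈ Finset.range (n+1), p k * fourierPartialSum f k x) / P - f x
      = (1/Real.pi) * ∫ t in (0:ℝ)..Real.pi, ψ t * Kn t := by
    have e1 : (∑ k ∈ Finset.range (n+1), p k * fourierPartialSum f k x) / P - f x
        = ∑ k ∈ Finset.range (n+1), a n k * (fourierPartialSum f k x - f x) := by
      have h1 : ∀ k ∈ Finset.range (n+1),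
          p k * fourierPartialSum f k x / P = a n k * fourierPartialSum f k x := by
        intro k hk
        rw [ha n k (Nat.lt_succ_iff.mp (Finset.mem_range.mp hk))]
        ring
      rw [Finset.sum_div, Finset.sum_congr rfl h1]
      have h2 : ∑ k ∈ Finset.range (n+1), a n k * (fourierPartialSum f k x - f x)
          = (∑ k ∈ Finset.range (n+1), a n k * fourierPartialSum f k x)
            - (∑ k ∈ Finset.range (n+1), a n k) * f x := by
        rw [Finset.sum_mul, ← Finset.sum_sub_distrib]
        exact Finset.sum_congr rfl fun k _ => by ring
      rw [h2, asum hp hP ha n, one_mul]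
    have hcont3 : ∀ k : ℕ,
        Continuous fun t => a n k * ((f (x+t) + f (x-t) - 2*f x) * Dk k t) := by
      intro k
      apply continuous_const.mul
      apply Continuous.mul _ (dk_continuous k)
      have c1 : Continuous fun t : ℝ => f (x + t) := hf.comp (continuous_const.add continuous_id)
      have c2 : Continuous fun t : ℝ => f (x - t) := hf.comp (continuous_const.sub continuous_id)
      exact (c1.add c2).sub continuous_const
    have e4 : ∑ k ∈ Finset.range (n+1), a n k * (fourierPartialSum f k x - f x)
        = (1/Real.pi) * ∫ t in (0:ℝ)..Real.pi,
            ∑ k ∈ Finset.range (n+1), a n k * ((f (x+t) + f (x-t) - 2*f x) * Dk k t) := by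
      rw [intervalIntegral.integral_finset_sum
          (fun k _ => (hcont3 k).intervalIntegrable _ _)]
      rw [Finset.mul_sum]
      refine Finset.sum_congr rfl fun k hk => ?_
      rw [fps_sub hf hper k x, intervalIntegral.integral_const_mul]
      ring
    rw [e1, e4]
    congr 1
    refine intervalIntegral.integral_congr fun t _ => ?_
    rw [hψdef, hKn]
    simp only
    rw [Finset.mul_sum]
    exact Finset.sum_congr rfl fun k _ => by ring
  -- pointwise ψ bound
  have hψb : ∀ t : ℝ, 0 ≤ t → |ψ t| ≤ 2 * L * t ^ α := by
    intro t ht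
    rw [hψdef]
    have h1 : |f (x+t) - f x| ≤ L * t ^ α := by
      have := hL (x+t) x
      simpa [abs_of_nonneg ht] using this
    have h2 : |f (x-t) - f x| ≤ L * t ^ α := by
      have := hL (x-t) x
      have he : |x - t - x| = t := by rw [show x - t - x = -t by ring, abs_neg, abs_of_nonneg ht]
      rw [he] at this
      exact this
    calc |f (x + t) + f (x - t) - 2 * f x|
        = |(f (x+t) - f x) + (f (x-t) - f x)| := by congr 1; ring
      _ ≤ |f (x+t) - f x| + |f (x-t) - f x| := abs_add_le _ _
      _ ≤ 2 * L * t ^ α := by linarith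
  -- kernel bounds
  have hKB1 : ∀ t : ℝ, |Kn t| ≤ (n:ℝ) + 1 := by
    intro t
    rw [hKn]
    calc |∑ k ∈ Finset.range (n+1), a n k * Dk k t|
        ≤ ∑ k ∈ Finset.range (n+1), |a n k * Dk k t| := Finset.abs_sum_le_sum_abs _ _
      _ ≤ ∑ k ∈ Finset.range (n+1), a n k * ((n:ℝ)+1) := by
          refine Finset.sum_le_sum fun k hk => ?_
          have hk' : k ≤ n := Nat.lt_succ_iff.mp (Finset.mem_range.mp hk)
          have h0 := ank_nonneg hp hP ha hk'
          rw [abs_mul, abs_of_nonneg h0]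
          refine mul_le_mul_of_nonneg_left ((dk_bound k t).trans ?_) h0
          have : (k:ℝ) ≤ (n:ℝ) := Nat.cast_le.mpr hk'
          linarith
      _ = (n:ℝ) + 1 := by rw [← Finset.sum_mul, asum hp hP ha n, one_mul]
  have hsin : ∀ t : ℝ, 0 < t → t ≤ Real.pi → 0 < Real.sin (t/2) ∧ t / Real.pi ≤ Real.sin (t/2) := by
    intro t ht0 htpi
    constructor
    · apply Real.sin_pos_of_pos_of_lt_pi (by linarith)
      linarith
    · have := Real.mul_le_sin (x := t/2) (by linarith) (by linarith)
      calc t / Real.pi = 2 / Real.pi * (t/2) := by field_simp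
        _ ≤ Real.sin (t/2) := this
  have hKnform : ∀ t : ℝ, Real.sin (t/2) ≠ 0 →
      Kn t = (∑ k ∈ Finset.range (n+1), a n k * Real.sin (((k:ℝ) + 1/2) * t))
              / (2 * Real.sin (t/2)) := by
    intro t hs
    rw [hKn]
    rw [eq_div_iff (by simpa using hs), Finset.sum_mul]
    refine Finset.sum_congr rfl fun k _ => ?_
    rw [← dk_sin k t]
    ring
  have hKB2 : ∀ t : ℝ, 0 < t → t ≤ Real.pi → |Kn t| ≤ Real.pi / (2 * t) := by
    intro t ht0 htpi
    obtain ⟨hs0, hslb⟩ := hsin t ht0 htpi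
    rw [hKnform t (ne_of_gt hs0), abs_div]
    have hnum := kernel_sum_bound' hp hP ha n t
    have hden : |2 * Real.sin (t/2)| = 2 * Real.sin (t/2) := abs_of_pos (by linarith)
    rw [hden]
    rw [div_le_div_iff₀ (by linarith) (by positivity)]
    have htp : t / Real.pi ≤ Real.sin (t/2) := hslb
    have h2 : 2 * t * (t / Real.pi) ≤ 2 * t * Real.sin (t/2) := by nlinarith
    calc |∑ k ∈ Finset.range (n+1), a n k * Real.sin (((k:ℝ) + 1/2) * t)| * (2*t)
        ≤ 1 * (2*t) := by nlinarith [hnum]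
      _ ≤ Real.pi * (2 * Real.sin (t/2)) := by
          rw [one_mul]
          have := mul_le_mul_of_nonneg_left htp (le_of_lt (mul_pos two_pos ht0))
          calc 2*t = Real.pi * (2 * (t / Real.pi)) := by field_simp
            _ ≤ Real.pi * (2 * Real.sin (t/2)) := by nlinarith
  have hKB3 : ∀ t : ℝ, 0 < t → t ≤ Real.pi → |Kn t| ≤ Real.pi^2 * (C+1) * δ / t^2 := by
    intro t ht0 htpi
    obtain ⟨hs0, hslb⟩ := hsin t ht0 htpi
    rw [hKnform t (ne_of_gt hs0), abs_div]
    have hnum := kernel_sum_bound hβ hp hP ha hC hA n hs0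
    have hden : |2 * Real.sin (t/2)| = 2 * Real.sin (t/2) := abs_of_pos (by linarith)
    rw [hden]
    have hslb' : t / Real.pi ≤ Real.sin (t/2) := hslb
    have htppos : 0 < t / Real.pi := by positivity
    rw [div_le_div_iff₀ (by linarith) (by positivity)]
    calc |∑ k ∈ Finset.range (n+1), a n k * Real.sin (((k:ℝ) + 1/2) * t)| * t^2
        ≤ (2 * (C+1) * δ / Real.sin (t/2)) * t^2 := by
          exact mul_le_mul_of_nonneg_right hnum (by positivity)
      _ ≤ Real.pi^2 * (C+1) * δ * (2 * Real.sin (t/2)) := by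
          rw [div_mul_eq_mul_div, div_le_iff₀ hs0]
          have h1 : t^2 ≤ Real.pi^2 * Real.sin (t/2)^2 := by
            have := mul_le_mul_of_nonneg_left hslb' (le_of_lt Real.pi_pos)
            have h2 : t ≤ Real.pi * Real.sin (t/2) := by
              calc t = Real.pi * (t / Real.pi) := by field_simp
                _ ≤ Real.pi * Real.sin (t/2) := by nlinarith
            nlinarith
          have h2 := mul_le_mul_of_nonneg_left h1 (by positivity : (0:ℝ) ≤ 2*(C+1)*δ)
          nlinarith [h2]
  -- final estimate
  set u : ℝ := min (1/((n:ℝ)+1)) δ with hu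
  have hn1 : (0:ℝ) < (n:ℝ) + 1 := by positivity
  have hu0 : 0 < u := lt_min (by positivity) hδpos
  have huδ : u ≤ δ := min_le_right _ _
  have hδπ : δ ≤ Real.pi := le_trans hδle1 hpi1
  have huπ : u ≤ Real.pi := le_trans huδ hδπ
  have hu1 : ((n:ℝ)+1) * u ≤ 1 := by
    have : u ≤ 1/((n:ℝ)+1) := min_le_left _ _
    rw [← le_div_iff₀' hn1]
    exact this
  have hψKint : ∀ c d : ℝ, IntervalIntegrable (fun t => ψ t * Kn t) volume c d :=
    fun c d => (hψc.mul hKnc).intervalIntegrable c d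
  have hsplit : (∫ t in (0:ℝ)..Real.pi, ψ t * Kn t)
      = (∫ t in (0:ℝ)..u, ψ t * Kn t) + (∫ t in u..δ, ψ t * Kn t)
        + ∫ t in δ..Real.pi, ψ t * Kn t := by
    rw [intervalIntegral.integral_add_adjacent_intervals (hψKint 0 u) (hψKint u δ),
      intervalIntegral.integral_add_adjacent_intervals (hψKint 0 δ) (hψKint δ Real.pi)]
  -- part 1
  have hI1 : |∫ t in (0:ℝ)..u, ψ t * Kn t| ≤ 2*L*δ^α := by
    have hb : ∀ᵐ t ∂(volume.restrict (Set.uIoc 0 u)), ‖ψ t * Kn t‖ ≤ 2*L*((n:ℝ)+1) * t^α := by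
      rw [Set.uIoc_of_le (le_of_lt hu0)]
      refine (ae_restrict_iff' measurableSet_Ioc).mpr (Filter.Eventually.of_forall ?_)
      intro t ht
      have ht0 : 0 ≤ t := le_of_lt ht.1
      rw [Real.norm_eq_abs, abs_mul]
      calc |ψ t| * |Kn t| ≤ (2*L*t^α) * ((n:ℝ)+1) :=
            mul_le_mul (hψb t ht0) (hKB1 t) (abs_nonneg _) (by positivity)
        _ = 2*L*((n:ℝ)+1) * t^α := by ring
    have hg1 : IntervalIntegrable (fun t => 2*L*((n:ℝ)+1) * t^α) volume 0 u :=
      (intervalIntegral.intervalIntegrable_rpow' (by linarith)).const_mul _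
    have h := intervalIntegral.norm_integral_le_of_norm_le (le_of_lt hu0) (by rw [Set.uIoc_of_le (le_of_lt hu0)] at hb; exact (ae_restrict_iff' measurableSet_Ioc).mp hb) hg1
    rw [Real.norm_eq_abs] at h
    refine h.trans (le_trans (le_abs_self _) ?_)
    rw [intervalIntegral.integral_const_mul, integral_rpow (Or.inl (by linarith))]
    rw [Real.zero_rpow (by linarith), sub_zero]
    have huα : u^(α+1) = u^α * u := by
      rw [Real.rpow_add hu0, Real.rpow_one]
    have huaδ : u^α ≤ δ^α := Real.rpow_le_rpow (le_of_lt hu0) huδ (le_of_lt hα0)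
    have hαp : 0 < α + 1 := by linarith
    have hval : 2*L*((n:ℝ)+1) * (u^(α+1)/(α+1)) = (2*L/(α+1)) * (((n:ℝ)+1)*u) * u^α := by
      rw [huα]; field_simp
    rw [abs_of_nonneg (by positivity), hval]
    have h1 : (2*L/(α+1)) * (((n:ℝ)+1)*u) * u^α ≤ (2*L/(α+1)) * 1 * δ^α := by
      have h2 : (0:ℝ) ≤ 2*L/(α+1) := by positivity
      have h3 : 0 ≤ u^α := Real.rpow_nonneg (le_of_lt hu0) α
      nlinarith [mul_le_mul hu1 huaδ h3 (by norm_num : (0:ℝ) ≤ 1)]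
    refine h1.trans ?_
    rw [mul_one]
    have : 2*L/(α+1) ≤ 2*L := by
      rw [div_le_iff₀ hαp]; nlinarith
    nlinarith [Real.rpow_nonneg (le_of_lt hδpos) α]
  -- part 2
  have hI2 : |∫ t in u..δ, ψ t * Kn t| ≤ L*Real.pi*δ^α/α := by
    have hb : ∀ᵐ t ∂(volume.restrict (Set.uIoc u δ)), ‖ψ t * Kn t‖ ≤ L*Real.pi * t^(α-1) := by
      rw [Set.uIoc_of_le huδ]
      refine (ae_restrict_iff' measurableSet_Ioc).mpr (Filter.Eventually.of_forall ?_)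
      intro t ht
      have ht0 : 0 < t := lt_of_le_of_lt (le_of_lt hu0) ht.1
      have htπ : t ≤ Real.pi := le_trans ht.2 hδπ
      rw [Real.norm_eq_abs, abs_mul]
      have he : L*Real.pi * t^(α-1) = (2*L*t^α) * (Real.pi/(2*t)) := by
        rw [Real.rpow_sub ht0, Real.rpow_one]
        field_simp
      rw [he]
      exact mul_le_mul (hψb t (le_of_lt ht0)) (hKB2 t ht0 htπ) (abs_nonneg _) (by positivity)
    have hg2 : IntervalIntegrable (fun t => L*Real.pi * t^(α-1)) volume u δ := by
      refine (intervalIntegral.intervalIntegrable_rpow (μ := volume) (Or.inr ?_)).const_mul _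
      rw [Set.uIcc_of_le huδ]
      intro hmem
      exact absurd hmem.1 (not_le.mpr hu0)
    have h := intervalIntegral.norm_integral_le_of_norm_le huδ (by rw [Set.uIoc_of_le huδ] at hb; exact (ae_restrict_iff' measurableSet_Ioc).mp hb) hg2
    rw [Real.norm_eq_abs] at h
    refine h.trans (le_trans (le_abs_self _) ?_)
    rw [intervalIntegral.integral_const_mul,
      integral_rpow (Or.inr ⟨by linarith, by
        rw [Set.uIcc_of_le huδ]; intro hmem; exact absurd hmem.1 (not_le.mpr hu0)⟩)]
    have e1 : α - 1 + 1 = α := by ring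
    rw [e1]
    have huaδ : u^α ≤ δ^α := Real.rpow_le_rpow (le_of_lt hu0) huδ (le_of_lt hα0)
    have hu' : 0 ≤ u^α := Real.rpow_nonneg (le_of_lt hu0) α
    have h0 : 0 ≤ δ^α - u^α := by linarith
    rw [abs_of_nonneg (mul_nonneg (by positivity) (div_nonneg h0 (le_of_lt hα0)))]
    have h2 : L*Real.pi*((δ^α - u^α)/α) ≤ L*Real.pi*(δ^α/α) := by
      refine mul_le_mul_of_nonneg_left ?_ (by positivity)
      gcongr
      linarith
    exact h2.trans (le_of_eq (by ring))
  -- part 3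
  have hI3 : |∫ t in δ..Real.pi, ψ t * Kn t| ≤ 2*L*Real.pi^2*(C+1)*δ^α/(1-α) := by
    have hb : ∀ᵐ t ∂(volume.restrict (Set.uIoc δ Real.pi)), ‖ψ t * Kn t‖
        ≤ 2*L*Real.pi^2*(C+1)*δ * t^(α-2) := by
      rw [Set.uIoc_of_le hδπ]
      refine (ae_restrict_iff' measurableSet_Ioc).mpr (Filter.Eventually.of_forall ?_)
      intro t ht
      have ht0 : 0 < t := lt_trans hδpos ht.1
      have htπ : t ≤ Real.pi := ht.2
      rw [Real.norm_eq_abs, abs_mul]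
      have he : 2*L*Real.pi^2*(C+1)*δ * t^(α-2) = (2*L*t^α) * (Real.pi^2*(C+1)*δ/t^2) := by
        rw [show α - 2 = α - (2:ℕ) by norm_num, Real.rpow_sub ht0, Real.rpow_natCast]
        field_simp
      rw [he]
      exact mul_le_mul (hψb t (le_of_lt ht0)) (hKB3 t ht0 htπ) (abs_nonneg _) (by positivity)
    have hg3 : IntervalIntegrable (fun t => 2*L*Real.pi^2*(C+1)*δ * t^(α-2)) volume δ Real.pi := by
      refine (intervalIntegral.intervalIntegrable_rpow (μ := volume) (Or.inr ?_)).const_mul _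
      rw [Set.uIcc_of_le hδπ]
      intro hmem
      exact absurd hmem.1 (not_le.mpr hδpos)
    have h := intervalIntegral.norm_integral_le_of_norm_le hδπ (by rw [Set.uIoc_of_le hδπ] at hb; exact (ae_restrict_iff' measurableSet_Ioc).mp hb) hg3
    rw [Real.norm_eq_abs] at h
    refine h.trans (le_trans (le_abs_self _) ?_)
    rw [intervalIntegral.integral_const_mul,
      integral_rpow (Or.inr ⟨by linarith, by
        rw [Set.uIcc_of_le hδπ]; intro hmem; exact absurd hmem.1 (not_le.mpr hδpos)⟩)]
    have e1 : α - 2 + 1 = α - 1 := by ring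
    rw [e1]
    have hc0 : (0:ℝ) ≤ 2*L*Real.pi^2*(C+1)*δ := by positivity
    have hval : |2*L*Real.pi^2*(C+1)*δ * ((Real.pi^(α-1) - δ^(α-1))/(α-1))|
        ≤ 2*L*Real.pi^2*(C+1)*δ * (δ^(α-1)/(1-α)) := by
      rw [abs_mul, abs_of_nonneg hc0]
      refine mul_le_mul_of_nonneg_left ?_ hc0
      have hge : Real.pi^(α-1) ≤ δ^(α-1) :=
        Real.rpow_le_rpow_of_nonpos hδpos hδπ (by linarith)
      have hππ : 0 ≤ Real.pi^(α-1) := Real.rpow_nonneg (le_of_lt hpi) _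
      have habs : |Real.pi^(α-1) - δ^(α-1)| ≤ δ^(α-1) := by
        rw [abs_sub_comm, abs_of_nonneg (by linarith)]
        linarith
      rw [abs_div, abs_of_neg (by linarith : α - 1 < 0)]
      rw [show -(α-1) = 1-α by ring]
      gcongr
    refine hval.trans (le_of_eq ?_)
    have hδα : δ * δ^(α-1) = δ^α := by
      rw [Real.rpow_sub hδpos, Real.rpow_one]
      field_simp
    calc 2*L*Real.pi^2*(C+1)*δ * (δ^(α-1)/(1-α))
        = 2*L*Real.pi^2*(C+1)*(δ*δ^(α-1))/(1-α) := by ring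
      _ = 2*L*Real.pi^2*(C+1)*δ^α/(1-α) := by rw [hδα]
  -- combine
  have hδα0 : 0 ≤ δ^α := Real.rpow_nonneg (le_of_lt hδpos) α
  have htot : |(∑ k ∈ Finset.range (n+1), p k * fourierPartialSum f k x) / P - f x|
      ≤ (2*L + L*Real.pi/α + 2*L*Real.pi^2*(C+1)/(1-α)) * δ^α := by
    rw [hLHS, hsplit]
    have h1 : |1/Real.pi * ((∫ t in (0:ℝ)..u, ψ t * Kn t) + (∫ t in u..δ, ψ t * Kn t)
        + ∫ t in δ..Real.pi, ψ t * Kn t)|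
        ≤ 1 * (|∫ t in (0:ℝ)..u, ψ t * Kn t| + |∫ t in u..δ, ψ t * Kn t|
          + |∫ t in δ..Real.pi, ψ t * Kn t|) := by
      rw [abs_mul]
      refine mul_le_mul ?_ ?_ (abs_nonneg _) (by norm_num)
      · rw [abs_of_nonneg (by positivity : (0:ℝ) ≤ 1/Real.pi)]
        rw [div_le_one hpi]
        exact hpi1
      · calc |(∫ t in (0:ℝ)..u, ψ t * Kn t) + (∫ t in u..δ, ψ t * Kn t)
            + ∫ t in δ..Real.pi, ψ t * Kn t|
            ≤ |(∫ t in (0:ℝ)..u, ψ t * Kn t) + (∫ t in u..δ, ψ t * Kn t)|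
              + |∫ t in δ..Real.pi, ψ t * Kn t| := abs_add_le _ _
          _ ≤ _ := by
              have := abs_add_le (∫ t in (0:ℝ)..u, ψ t * Kn t) (∫ t in u..δ, ψ t * Kn t)
              linarith
    refine h1.trans ?_
    rw [one_mul]
    have e2 : (2*L + L*Real.pi/α + 2*L*Real.pi^2*(C+1)/(1-α)) * δ^α
        = 2*L*δ^α + L*Real.pi*δ^α/α + 2*L*Real.pi^2*(C+1)*δ^α/(1-α) := by
      field_simp
    rw [e2]
    linarith [hI1, hI2, hI3]
  rw [← hδval] at *
  refine htot.trans ?_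
  nlinarith [hδα0]
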